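/- The convex function f(t) = −log t on (0,∞) is subentropic: for every natural number k, the multivariate operator function (ρ₁,…,ρ_k) ↦ Tr log(ρ₁ + ⋯ + ρ_k) − (Tr log ρ₁ + ⋯ + Tr log ρ_k) is convex in positive definite operators ρ₁,…,ρ_k on any finite-dimensional Hilbert space. -/

import Mathlib

open scoped Matrix
open Matrix
open scoped ComplexOrder

noncomputable section

/-- The trace of `f` applied (by the functional calculus) to a Hermitian matrix,
computed via the eigenvalues.  Junk value `0` on non-Hermitian matrices. -/
def trFn (f : ℝ → ℝ) {d : Type} [Fintype d] [DecidableEq d] (ρ : Matrix d d ℂ) : ℝ :=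
  if hρ : ρ.IsHermitian then ∑ i, f (hρ.eigenvalues i) else 0

/-- `f` applied to a Hermitian matrix by the functional calculus (spectral theorem).
Junk value `0` on non-Hermitian matrices. -/
def matFn (f : ℝ → ℝ) {d : Type} [Fintype d] [DecidableEq d] (ρ : Matrix d d ℂ) :
    Matrix d d ℂ :=
  if hρ : ρ.IsHermitian then
    (hρ.eigenvectorUnitary : Matrix d d ℂ) *
      Matrix.diagonal (fun i => (f (hρ.eigenvalues i) : ℂ)) *
      star (hρ.eigenvectorUnitary : Matrix d d ℂ)
  else 0

/-- The partial trace over the second factor of a bipartite system `H₁ ⊗ H₂`,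
where operators on `H₁ ⊗ H₂` are modelled as matrices indexed by `Fin m × Fin n`. -/
def partialTrace {m n : ℕ} (ρ : Matrix (Fin m × Fin n) (Fin m × Fin n) ℂ) :
    Matrix (Fin m) (Fin m) ℂ :=
  Matrix.of fun i j => ∑ k : Fin n, ρ (i, k) (j, k)

/-- A convex function `f : (0,∞) → ℝ` is entropic if on every finite-dimensional
bipartite system the map `ρ ↦ -Tr f(ρ₁) + Tr f(ρ)` is convex in positive definite `ρ`,
where `ρ₁` is the partial trace of `ρ` on the first factor. -/
def IsEntropic (f : ℝ → ℝ) : Prop :=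
  ConvexOn ℝ (Set.Ioi (0 : ℝ)) f ∧
  ∀ m n : ℕ,
    ConvexOn ℝ {ρ : Matrix (Fin m × Fin n) (Fin m × Fin n) ℂ | ρ.PosDef}
      (fun ρ => - trFn f (partialTrace ρ) + trFn f ρ)

/-- A convex function `f : (0,∞) → ℝ` is subentropic of order `k` if
`G(ρ₁,…,ρ_k) = -Tr f(ρ₁+⋯+ρ_k) + Tr f(ρ₁) + ⋯ + Tr f(ρ_k)` is convex in `k`-tuples of
positive definite operators on any finite-dimensional Hilbert space. -/
def SubentropicOfOrder (f : ℝ → ℝ) (k : ℕ) : Prop :=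
  ConvexOn ℝ (Set.Ioi (0 : ℝ)) f ∧
  ∀ n : ℕ,
    ConvexOn ℝ {ρ : Fin k → Matrix (Fin n) (Fin n) ℂ | ∀ i, (ρ i).PosDef}
      (fun ρ => - trFn f (∑ i, ρ i) + ∑ i, trFn f (ρ i))

/-- A function is subentropic if it is subentropic of all orders. -/
def Subentropic (f : ℝ → ℝ) : Prop :=
  ∀ k : ℕ, SubentropicOfOrder f k

/-- Divided difference of `g`, with `g'` on the diagonal. -/
def divDiff (g : ℝ → ℝ) (x y : ℝ) : ℝ :=
  if x = y then deriv g x else (g x - g y) / (x - y)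

/-- Conjugation `h ↦ U * h * U*` as a linear operator on matrices. -/
def conjEnd {n : ℕ} (U : Matrix (Fin n) (Fin n) ℂ) :
    Module.End ℂ (Matrix (Fin n) (Fin n) ℂ) :=
  (LinearMap.mulLeft ℂ U).comp (LinearMap.mulRight ℂ (star U))

/-- Hadamard (entrywise) multiplication by a fixed matrix `L`, as a linear operator. -/
def hadamardEnd {n : ℕ} (L : Matrix (Fin n) (Fin n) ℂ) :
    Module.End ℂ (Matrix (Fin n) (Fin n) ℂ) where
  toFun h := L ⊙ h
  map_add' h₁ h₂ := Matrix.hadamard_add L h₁ h₂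
  map_smul' c h := Matrix.hadamard_smul L h c

/-- The Fréchet differential `dg(ρ)` of the matrix function induced by `g` at the
Hermitian matrix `ρ`: in a basis diagonalising `ρ` it acts as the Hadamard product
with the Löwner matrix of divided differences of `g`.  Junk value `0` at
non-Hermitian matrices. -/
def frechetDiff (g : ℝ → ℝ) {n : ℕ} (ρ : Matrix (Fin n) (Fin n) ℂ) :
    Module.End ℂ (Matrix (Fin n) (Fin n) ℂ) :=
  if hρ : ρ.IsHermitian then
    (conjEnd (hρ.eigenvectorUnitary : Matrix (Fin n) (Fin n) ℂ)).comp
      ((hadamardEnd (Matrix.of fun i j =>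
          (divDiff g (hρ.eigenvalues i) (hρ.eigenvalues j) : ℂ))).comp
        (conjEnd (star (hρ.eigenvectorUnitary : Matrix (Fin n) (Fin n) ℂ))))
  else 0

/-- The order, with respect to the trace inner product, between operators on `B(H)`:
`T ≤ S` iff `S - T` is a positive superoperator. -/
def endLE {n : ℕ} (T S : Module.End ℂ (Matrix (Fin n) (Fin n) ℂ)) : Prop :=
  ∀ h : Matrix (Fin n) (Fin n) ℂ, 0 ≤ Matrix.trace (star h * (S h - T h))

/-- The harmonic mean `H₂(A,B) = 2 (A⁻¹ + B⁻¹)⁻¹` of two (positive definite, hence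
invertible) operators on `B(H)`. -/
def harmonicMeanEnd {n : ℕ} (A B : Module.End ℂ (Matrix (Fin n) (Fin n) ℂ)) :
    Module.End ℂ (Matrix (Fin n) (Fin n) ℂ) :=
  (2 : ℂ) • Ring.inverse (Ring.inverse A + Ring.inverse B)

/-- The amplification `id_n ⊗ Φ` of a linear map on matrices. -/
def amplify {m k : ℕ} (Φ : Matrix (Fin m) (Fin m) ℂ →ₗ[ℂ] Matrix (Fin k) (Fin k) ℂ)
    (n : ℕ) (A : Matrix (Fin n × Fin m) (Fin n × Fin m) ℂ) :
    Matrix (Fin n × Fin k) (Fin n × Fin k) ℂ :=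
  Matrix.of fun p q => Φ (Matrix.of fun x y => A (p.1, x) (q.1, y)) p.2 q.2

/-- A linear map on matrices is completely positive if all its amplifications
preserve positive semidefiniteness. -/
def IsCompletelyPositive {m k : ℕ}
    (Φ : Matrix (Fin m) (Fin m) ℂ →ₗ[ℂ] Matrix (Fin k) (Fin k) ℂ) : Prop :=
  ∀ n : ℕ, ∀ A : Matrix (Fin n × Fin m) (Fin n × Fin m) ℂ,
    A.PosSemidef → (amplify Φ n A).PosSemidef

/-- A quantum channel is a completely positive trace preserving linear map. -/
def IsQuantumChannel {m k : ℕ}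
    (Φ : Matrix (Fin m) (Fin m) ℂ →ₗ[ℂ] Matrix (Fin k) (Fin k) ℂ) : Prop :=
  IsCompletelyPositive Φ ∧ ∀ A, (Φ A).trace = A.trace

namespace SubentropyAux
set_option linter.unusedSectionVars false

variable {d : Type} [Fintype d] [DecidableEq d]

lemma real_smul_eq (a : ℝ) (M : Matrix d d ℂ) : a • M = (a : ℂ) • M := by
  ext i j
  simp [Matrix.smul_apply, Complex.real_smul]

lemma posDef_rsmul {M : Matrix d d ℂ} (hM : M.PosDef) {a : ℝ} (ha : 0 < a) :
    (a • M).PosDef := by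
  rw [real_smul_eq]
  refine ⟨?_, fun x hx => ?_⟩
  · have h : ((a : ℂ) • M)ᴴ = star (a : ℂ) • Mᴴ := conjTranspose_smul _ _
    rw [Matrix.IsHermitian, h, hM.1.eq, Complex.star_def, Complex.conj_ofReal]
  · exact (hM.smul (show (0 : ℂ) < a by exact_mod_cast ha)).2 hx

lemma posSemidef_rsmul {M : Matrix d d ℂ} (hM : M.PosSemidef) {a : ℝ} (ha : 0 ≤ a) :
    (a • M).PosSemidef := by
  rw [real_smul_eq]
  refine ⟨?_, fun x => ?_⟩
  · have h : ((a : ℂ) • M)ᴴ = star (a : ℂ) • Mᴴ := conjTranspose_smul _ _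
    rw [Matrix.IsHermitian, h, hM.1.eq, Complex.star_def, Complex.conj_ofReal]
  · exact (hM.smul (show (0 : ℂ) ≤ a by exact_mod_cast ha)).2 x

lemma posDef_combo {A B : Matrix d d ℂ} (hA : A.PosDef) (hB : B.PosDef) {a b : ℝ}
    (ha : 0 ≤ a) (hb : 0 ≤ b) (hab : a + b = 1) : (a • A + b • B).PosDef := by
  rcases eq_or_lt_of_le ha with h | h
  · have hb1 : b = 1 := by linarith
    simp [← h, hb1, hB]
  rcases eq_or_lt_of_le hb with h' | h'
  · have ha1 : a = 1 := by linarith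
    simp [← h', ha1, hA]
  exact (posDef_rsmul hA h).add (posDef_rsmul hB h')

lemma det_re_pos {M : Matrix d d ℂ} (hM : M.PosDef) : 0 < M.det.re :=
  (Complex.lt_def.mp hM.det_pos).1

lemma det_eq_re {M : Matrix d d ℂ} (hM : M.PosDef) : M.det = (M.det.re : ℂ) := by
  have h := (Complex.lt_def.mp hM.det_pos).2
  exact Complex.ext rfl (by simpa using h.symm)

open scoped MatrixOrder in
lemma diag_form {X Y : Matrix d d ℂ} (hX : X.PosDef) (hY : Y.PosSemidef) :
    ∃ e : d → ℝ, (∀ i, 0 ≤ e i) ∧ Y.det.re = (∏ i, e i) * X.det.re ∧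
      ∀ a b : ℝ, (a • X + b • Y).det.re = X.det.re * ∏ i, (a + b * e i) := by
  set S := CFC.sqrt X with hSdef
  have hSps : S.PosSemidef := Matrix.nonneg_iff_posSemidef.mp (CFC.sqrt_nonneg X)
  have hSH : S.IsHermitian := hSps.1
  have hSS : S * S = X := CFC.sqrt_mul_sqrt_self X hX.posSemidef.nonneg
  have hdet2 : S.det * S.det = X.det := by rw [← det_mul, hSS]
  have hXdet : IsUnit X.det := hX.det_pos.ne'.isUnit
  have hSdetU : IsUnit S.det := by
    rw [← hdet2] at hXdet
    exact isUnit_of_mul_isUnit_left hXdet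
  have hSi : S⁻¹ * S = 1 := nonsing_inv_mul S hSdetU
  have hSi' : S * S⁻¹ = 1 := mul_nonsing_inv S hSdetU
  have hSiH : (S⁻¹).IsHermitian := hSH.inv
  set Z := S⁻¹ * Y * S⁻¹ with hZdef
  have hZ : Z.PosSemidef := by
    have := hY.conjTranspose_mul_mul_same (B := S⁻¹)
    rwa [hSiH.eq] at this
  set e := hZ.1.eigenvalues with hedef
  have hYZ : Y = S * Z * S := by
    rw [hZdef]
    have : S * (S⁻¹ * Y * S⁻¹) * S = (S * S⁻¹) * Y * (S⁻¹ * S) := by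
      simp only [Matrix.mul_assoc]
    rw [this, hSi', hSi, Matrix.one_mul, Matrix.mul_one]
  have hZdet : Z.det = ((∏ i, e i : ℝ) : ℂ) := by
    rw [hZ.1.det_eq_prod_eigenvalues]
    push_cast
    rfl
  have hYdetC : Y.det = ((∏ i, e i : ℝ) : ℂ) * X.det := by
    rw [hYZ, det_mul, det_mul, mul_comm S.det, mul_assoc, hdet2, hZdet]
  refine ⟨e, hZ.eigenvalues_nonneg, ?_, ?_⟩
  · have h2 : Y.det = ((((∏ i, e i) * X.det.re : ℝ)) : ℂ) := by
      rw [hYdetC, det_eq_re hX, Complex.ofReal_re, ← Complex.ofReal_mul]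
    have h3 := congrArg Complex.re h2
    rwa [Complex.ofReal_re] at h3
  · intro a b
    set U := (hZ.1.eigenvectorUnitary : Matrix d d ℂ) with hUdef
    have hUU : U * star U = 1 := Matrix.mem_unitaryGroup_iff.mp hZ.1.eigenvectorUnitary.2
    have hZsp : Z = U * diagonal (RCLike.ofReal ∘ e) * star U := hZ.1.spectral_theorem
    have hdiag : (a : ℂ) • (1 : Matrix d d ℂ) + (b : ℂ) • diagonal (RCLike.ofReal ∘ e)
        = diagonal (fun i => (a : ℂ) + b * e i) := by
      ext i j
      by_cases h : i = j
      · subst h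
        simp [Matrix.diagonal_apply_eq, Matrix.one_apply_eq]
      · simp [Matrix.diagonal_apply_ne _ h, Matrix.one_apply_ne h]
    have h1 : U * ((a : ℂ) • (1 : Matrix d d ℂ) + (b : ℂ) • diagonal (RCLike.ofReal ∘ e)) * star U
        = (a : ℂ) • (1 : Matrix d d ℂ) + (b : ℂ) • Z := by
      simp only [Matrix.mul_add, Matrix.add_mul, Matrix.mul_smul, Matrix.smul_mul,
        Matrix.mul_one]
      rw [hUU, ← hZsp]
    rw [hdiag] at h1
    have key : a • X + b • Y = S * (U * diagonal (fun i => (a : ℂ) + b * e i) * star U) * S := by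
      calc a • X + b • Y = (a : ℂ) • X + (b : ℂ) • Y := by rw [real_smul_eq, real_smul_eq]
        _ = S * ((a : ℂ) • (1 : Matrix d d ℂ) + (b : ℂ) • Z) * S := by
            simp only [Matrix.mul_add, Matrix.add_mul, Matrix.mul_smul, Matrix.smul_mul,
              Matrix.mul_one]
            rw [hSS, ← hYZ]
        _ = S * (U * diagonal (fun i => (a : ℂ) + b * e i) * star U) * S := by rw [h1]
    have hUdet : U.det * (star U).det = 1 := by rw [← det_mul, hUU, det_one]
    have hdd : (diagonal (fun i => (a : ℂ) + b * e i)).det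
        = ((∏ i, (a + b * e i) : ℝ) : ℂ) := by
      rw [det_diagonal]
      push_cast
      rfl
    have hdetC : (a • X + b • Y).det
        = (X.det.re : ℂ) * ((∏ i, (a + b * e i) : ℝ) : ℂ) := by
      have h2 : (a • X + b • Y).det
          = S.det * S.det * (U.det * (star U).det) * ((∏ i, (a + b * e i) : ℝ) : ℂ) := by
        rw [key]
        simp only [det_mul, hdd]
        ring
      rw [h2, hUdet, hdet2, det_eq_re hX, Complex.ofReal_re, mul_one]
    have h4 := congrArg Complex.re hdetC
    rwa [← Complex.ofReal_mul, Complex.ofReal_re] at h4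

lemma det_mono {M N : Matrix d d ℂ} (hM : M.PosDef) (hN : N.PosSemidef) :
    M.det.re ≤ (M + N).det.re := by
  obtain ⟨e, he0, -, hform⟩ := diag_form hM hN
  have h := hform 1 1
  rw [one_smul, one_smul] at h
  rw [h]
  have h1 : (1 : ℝ) ≤ ∏ i, (1 + 1 * e i) := by
    calc (1 : ℝ) = ∏ _i : d, (1 : ℝ) := by simp
      _ ≤ ∏ i, (1 + 1 * e i) :=
        Finset.prod_le_prod (fun i _ => zero_le_one) (fun i _ => by nlinarith [he0 i])
  nlinarith [det_re_pos hM]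

lemma logdet_concave {X Y : Matrix d d ℂ} (hX : X.PosDef) (hY : Y.PosDef) {a b : ℝ}
    (ha : 0 < a) (hb : 0 < b) (hab : a + b = 1) :
    a * Real.log X.det.re + b * Real.log Y.det.re ≤ Real.log ((a • X + b • Y).det.re) := by
  obtain ⟨e, he0, hYdet, hform⟩ := diag_form hX hY.posSemidef
  have hx := det_re_pos hX
  have hy := det_re_pos hY
  have hprod : (0 : ℝ) < ∏ i, e i := by
    have : (∏ i, e i) = Y.det.re / X.det.re := by
      rw [hYdet]; field_simp
    rw [this]
    positivity
  have hstep : ∀ i, e i ^ b ≤ a + b * e i := by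
    intro i
    have := Real.geom_mean_le_arith_mean2_weighted ha.le hb.le zero_le_one (he0 i) hab
    simpa [Real.one_rpow] using this
  have hprodb : (∏ i, e i) ^ b ≤ ∏ i, (a + b * e i) := by
    rw [← Real.finset_prod_rpow _ _ (fun i _ => he0 i)]
    exact Finset.prod_le_prod (fun i _ => Real.rpow_nonneg (he0 i) b) (fun i _ => hstep i)
  have hcombo : (a • X + b • Y).det.re = X.det.re * ∏ i, (a + b * e i) := hform a b
  have hpos2 : (0 : ℝ) < (∏ i, e i) ^ b := Real.rpow_pos_of_pos hprod b
  have hle : X.det.re * (∏ i, e i) ^ b ≤ (a • X + b • Y).det.re := by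
    rw [hcombo]
    exact mul_le_mul_of_nonneg_left hprodb hx.le
  have hlog : Real.log (X.det.re * (∏ i, e i) ^ b) ≤ Real.log ((a • X + b • Y).det.re) :=
    Real.log_le_log (by positivity) hle
  have hexp : Real.log (X.det.re * (∏ i, e i) ^ b)
      = Real.log X.det.re + b * Real.log (∏ i, e i) := by
    rw [Real.log_mul hx.ne' hpos2.ne', Real.log_rpow hprod]
  have hlogprod : Real.log (∏ i, e i) = Real.log Y.det.re - Real.log X.det.re := by
    have : (∏ i, e i) = Y.det.re / X.det.re := by
      rw [hYdet]; field_simp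
    rw [this, Real.log_div hy.ne' hx.ne']
  rw [hexp, hlogprod] at hlog
  have hab' : a = 1 - b := by linarith
  have hre : a * Real.log X.det.re + b * Real.log Y.det.re
      = Real.log X.det.re + b * (Real.log Y.det.re - Real.log X.det.re) := by
    rw [hab']; ring
  linarith [hlog]

lemma pair_id {A B : Matrix d d ℂ} (hA : A.PosDef) (hB : B.PosDef) (Y Z : Matrix d d ℂ)
    (hYZ : Y + Z = 1) :
    Yᴴ * A * Y + Zᴴ * B * Z = (A⁻¹ + B⁻¹)⁻¹
      + (Y - A⁻¹ * (A⁻¹ + B⁻¹)⁻¹)ᴴ * (A + B) * (Y - A⁻¹ * (A⁻¹ + B⁻¹)⁻¹) := by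
  have hQ : (A⁻¹ + B⁻¹).PosDef := hA.inv.add hB.inv
  set Q := A⁻¹ + B⁻¹ with hQdef
  set P := Q⁻¹ with hPdef
  set W := Y - A⁻¹ * P with hWdef
  have hAu : IsUnit A.det := hA.det_pos.ne'.isUnit
  have hBu : IsUnit B.det := hB.det_pos.ne'.isUnit
  have hQu : IsUnit Q.det := hQ.det_pos.ne'.isUnit
  have hA1 : A⁻¹ * A = 1 := nonsing_inv_mul A hAu
  have hA2 : A * A⁻¹ = 1 := mul_nonsing_inv A hAu
  have hB1 : B⁻¹ * B = 1 := nonsing_inv_mul B hBu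
  have hB2 : B * B⁻¹ = 1 := mul_nonsing_inv B hBu
  have hQ1 : Q * P = 1 := mul_nonsing_inv Q hQu
  have hQ2 : P * Q = 1 := nonsing_inv_mul Q hQu
  have hPH : Pᴴ = P := (hQ.1.inv).eq
  have hAiH : (A⁻¹)ᴴ = A⁻¹ := (hA.1.inv).eq
  have hBiH : (B⁻¹)ᴴ = B⁻¹ := (hB.1.inv).eq
  have hsplit : A⁻¹ * P + B⁻¹ * P = 1 := by
    rw [← Matrix.add_mul, ← hQdef, hQ1]
  have hY : Y = A⁻¹ * P + W := by rw [hWdef]; abel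
  have hZ : Z = B⁻¹ * P - W := by
    have : Z = 1 - Y := by
      rw [← hYZ]; abel
    rw [this, ← hsplit, hY]; abel
  have hYH : Yᴴ = P * A⁻¹ + Wᴴ := by
    rw [hY, conjTranspose_add, conjTranspose_mul, hPH, hAiH]
  have hZH : Zᴴ = P * B⁻¹ - Wᴴ := by
    rw [hZ, conjTranspose_sub, conjTranspose_mul, hPH, hBiH]
  have e1 : Yᴴ * A * Y = P * A⁻¹ * P + P * W + Wᴴ * P + Wᴴ * A * W := by
    rw [hYH, hY]
    have expand : (P * A⁻¹ + Wᴴ) * A * (A⁻¹ * P + W)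
        = P * (A⁻¹ * A) * (A⁻¹ * P) + P * (A⁻¹ * A) * W
          + Wᴴ * (A * A⁻¹) * P + Wᴴ * A * W := by
      simp only [Matrix.add_mul, Matrix.mul_add, Matrix.mul_assoc]
      abel
    rw [expand, hA1, hA2, Matrix.mul_one, Matrix.mul_one]
    simp only [Matrix.mul_assoc]
  have e2 : Zᴴ * B * Z = P * B⁻¹ * P - P * W - Wᴴ * P + Wᴴ * B * W := by
    rw [hZH, hZ]
    have expand : (P * B⁻¹ - Wᴴ) * B * (B⁻¹ * P - W)
        = P * (B⁻¹ * B) * (B⁻¹ * P) - P * (B⁻¹ * B) * W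
          - Wᴴ * (B * B⁻¹) * P + Wᴴ * B * W := by
      simp only [Matrix.sub_mul, Matrix.mul_sub, Matrix.mul_assoc]
      abel
    rw [expand, hB1, hB2, Matrix.mul_one, Matrix.mul_one]
    simp only [Matrix.mul_assoc]
  have e3 : P * A⁻¹ * P + P * B⁻¹ * P = P := by
    calc P * A⁻¹ * P + P * B⁻¹ * P = P * Q * P := by
          rw [hQdef]
          simp only [Matrix.mul_add, Matrix.add_mul]
      _ = P := by rw [hQ2, Matrix.one_mul]
  have e4 : Wᴴ * A * W + Wᴴ * B * W = Wᴴ * (A + B) * W := by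
    simp only [Matrix.mul_add, Matrix.add_mul]
  rw [e1, e2]
  have e5 : P * A⁻¹ * P + P * W + Wᴴ * P + Wᴴ * A * W
      + (P * B⁻¹ * P - P * W - Wᴴ * P + Wᴴ * B * W)
      = P * A⁻¹ * P + P * B⁻¹ * P + (Wᴴ * A * W + Wᴴ * B * W) := by abel
  rw [e5, e3, e4]

lemma psum_concave {A B A' B' : Matrix d d ℂ} (hA : A.PosDef) (hB : B.PosDef)
    (hA' : A'.PosDef) (hB' : B'.PosDef) {a b : ℝ} (ha : 0 < a) (hb : 0 < b) (hab : a + b = 1) :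
    (((a • A + b • A')⁻¹ + (a • B + b • B')⁻¹)⁻¹
      - (a • (A⁻¹ + B⁻¹)⁻¹ + b • (A'⁻¹ + B'⁻¹)⁻¹)).PosSemidef := by
  have hAc : (a • A + b • A').PosDef := posDef_combo hA hA' ha.le hb.le hab
  have hBc : (a • B + b • B').PosDef := posDef_combo hB hB' ha.le hb.le hab
  set Ac := a • A + b • A' with hAcdef
  set Bc := a • B + b • B' with hBcdef
  have hQc : (Ac⁻¹ + Bc⁻¹).PosDef := hAc.inv.add hBc.inv
  set Pc := (Ac⁻¹ + Bc⁻¹)⁻¹ with hPcdef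
  set Y := Ac⁻¹ * Pc with hYdef
  set Z := Bc⁻¹ * Pc with hZdef
  have hYZ : Y + Z = 1 := by
    rw [hYdef, hZdef, ← Matrix.add_mul, hPcdef]
    exact mul_nonsing_inv _ (hQc.det_pos.ne'.isUnit)
  have hPc : Yᴴ * Ac * Y + Zᴴ * Bc * Z = Pc := by
    have h := pair_id hAc hBc Y Z hYZ
    have hzero : Y - Ac⁻¹ * (Ac⁻¹ + Bc⁻¹)⁻¹ = 0 := sub_self _
    rw [hzero] at h
    simpa using h
  have hsplitA : Yᴴ * Ac * Y = a • (Yᴴ * A * Y) + b • (Yᴴ * A' * Y) := by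
    rw [hAcdef, real_smul_eq a A, real_smul_eq b A', real_smul_eq a (Yᴴ * A * Y),
      real_smul_eq b (Yᴴ * A' * Y)]
    simp only [Matrix.mul_add, Matrix.add_mul, Matrix.mul_smul, Matrix.smul_mul]
  have hsplitB : Zᴴ * Bc * Z = a • (Zᴴ * B * Z) + b • (Zᴴ * B' * Z) := by
    rw [hBcdef, real_smul_eq a B, real_smul_eq b B', real_smul_eq a (Zᴴ * B * Z),
      real_smul_eq b (Zᴴ * B' * Z)]
    simp only [Matrix.mul_add, Matrix.add_mul, Matrix.mul_smul, Matrix.smul_mul]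
  have h1 := pair_id hA hB Y Z hYZ
  have h2 := pair_id hA' hB' Y Z hYZ
  set W₁ := Y - A⁻¹ * (A⁻¹ + B⁻¹)⁻¹ with hW1def
  set W₂ := Y - A'⁻¹ * (A'⁻¹ + B'⁻¹)⁻¹ with hW2def
  have main : Pc = a • ((A⁻¹ + B⁻¹)⁻¹ + W₁ᴴ * (A + B) * W₁)
      + b • ((A'⁻¹ + B'⁻¹)⁻¹ + W₂ᴴ * (A' + B') * W₂) := by
    rw [← h1, ← h2, ← hPc, hsplitA, hsplitB, smul_add, smul_add]
    abel
  have diff : Pc - (a • (A⁻¹ + B⁻¹)⁻¹ + b • (A'⁻¹ + B'⁻¹)⁻¹)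
      = a • (W₁ᴴ * (A + B) * W₁) + b • (W₂ᴴ * (A' + B') * W₂) := by
    rw [main, smul_add, smul_add]
    abel
  rw [diff]
  exact (posSemidef_rsmul ((hA.add hB).posSemidef.conjTranspose_mul_mul_same W₁) ha.le).add
    (posSemidef_rsmul ((hA'.add hB').posSemidef.conjTranspose_mul_mul_same W₂) hb.le)

/-- real log-determinant -/
noncomputable def ldet (M : Matrix d d ℂ) : ℝ := Real.log M.det.re

lemma H_eq {A B : Matrix d d ℂ} (hA : A.PosDef) (hB : B.PosDef) :
    ldet (A + B) - ldet A - ldet B = - ldet ((A⁻¹ + B⁻¹)⁻¹) := by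
  have hAB : (A + B).PosDef := hA.add hB
  have hQ : (A⁻¹ + B⁻¹).PosDef := hA.inv.add hB.inv
  have hP : ((A⁻¹ + B⁻¹)⁻¹).PosDef := hQ.inv
  have hAu : IsUnit A.det := hA.det_pos.ne'.isUnit
  have hBu : IsUnit B.det := hB.det_pos.ne'.isUnit
  have hx := det_re_pos hA
  have hy := det_re_pos hB
  have hs := det_re_pos hAB
  have hq0 := det_re_pos hQ
  have hid : A⁻¹ * (A + B) * B⁻¹ = A⁻¹ + B⁻¹ := by
    rw [Matrix.mul_add, Matrix.add_mul, nonsing_inv_mul A hAu, Matrix.mul_assoc,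
      mul_nonsing_inv B hBu, Matrix.one_mul, Matrix.mul_one, add_comm]
  have hdetQ : (A⁻¹ + B⁻¹).det = (A.det)⁻¹ * (A + B).det * (B.det)⁻¹ := by
    rw [← hid, det_mul, det_mul, det_nonsing_inv, det_nonsing_inv]
    simp [Ring.inverse_eq_inv']
  have h5 : (A⁻¹ + B⁻¹).det.re = (A.det.re)⁻¹ * (A + B).det.re * (B.det.re)⁻¹ := by
    have h5' : (A⁻¹ + B⁻¹).det
        = (((A.det.re)⁻¹ * (A + B).det.re * (B.det.re)⁻¹ : ℝ) : ℂ) := by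
      rw [hdetQ, det_eq_re hA, det_eq_re hB, det_eq_re hAB]
      simp only [Complex.ofReal_re]
      push_cast
      ring
    rw [h5', Complex.ofReal_re]
  have hdetP : ((A⁻¹ + B⁻¹)⁻¹).det = ((A⁻¹ + B⁻¹).det)⁻¹ := by
    rw [det_nonsing_inv, Ring.inverse_eq_inv']
  have h6 : ((A⁻¹ + B⁻¹)⁻¹).det.re = ((A⁻¹ + B⁻¹).det.re)⁻¹ := by
    have h6' : ((A⁻¹ + B⁻¹)⁻¹).det = ((((A⁻¹ + B⁻¹).det.re)⁻¹ : ℝ) : ℂ) := by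
      rw [hdetP, det_eq_re hQ]
      simp only [Complex.ofReal_re]
      push_cast
      ring
    rw [h6', Complex.ofReal_re]
  show Real.log (A + B).det.re - Real.log A.det.re - Real.log B.det.re
      = - Real.log ((A⁻¹ + B⁻¹)⁻¹).det.re
  rw [h6, h5, Real.log_inv, Real.log_mul (by positivity) (by positivity),
    Real.log_mul (by positivity) (by positivity), Real.log_inv, Real.log_inv]
  ring

lemma H_ineq {A B A' B' : Matrix d d ℂ} (hA : A.PosDef) (hB : B.PosDef)
    (hA' : A'.PosDef) (hB' : B'.PosDef) {a b : ℝ} (ha : 0 < a) (hb : 0 < b) (hab : a + b = 1) :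
    ldet ((a • A + b • A') + (a • B + b • B')) - ldet (a • A + b • A') - ldet (a • B + b • B')
      ≤ a * (ldet (A + B) - ldet A - ldet B) + b * (ldet (A' + B') - ldet A' - ldet B') := by
  have hAc : (a • A + b • A').PosDef := posDef_combo hA hA' ha.le hb.le hab
  have hBc : (a • B + b • B').PosDef := posDef_combo hB hB' ha.le hb.le hab
  have hPP : ((A⁻¹ + B⁻¹)⁻¹).PosDef := (hA.inv.add hB.inv).inv
  have hPP' : ((A'⁻¹ + B'⁻¹)⁻¹).PosDef := (hA'.inv.add hB'.inv).inv
  have hPc : (((a • A + b • A')⁻¹ + (a • B + b • B')⁻¹)⁻¹).PosDef := (hAc.inv.add hBc.inv).inv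
  have hcomb : (a • (A⁻¹ + B⁻¹)⁻¹ + b • (A'⁻¹ + B'⁻¹)⁻¹).PosDef :=
    posDef_combo hPP hPP' ha.le hb.le hab
  rw [H_eq hAc hBc, H_eq hA hB, H_eq hA' hB']
  have hpsd := psum_concave hA hB hA' hB' ha hb hab
  have h7 : (a • (A⁻¹ + B⁻¹)⁻¹ + b • (A'⁻¹ + B'⁻¹)⁻¹)
      + ((((a • A + b • A')⁻¹ + (a • B + b • B')⁻¹)⁻¹)
        - (a • (A⁻¹ + B⁻¹)⁻¹ + b • (A'⁻¹ + B'⁻¹)⁻¹))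
      = (((a • A + b • A')⁻¹ + (a • B + b • B')⁻¹)⁻¹) := by abel
  have hmono : (a • (A⁻¹ + B⁻¹)⁻¹ + b • (A'⁻¹ + B'⁻¹)⁻¹).det.re
      ≤ ((((a • A + b • A')⁻¹ + (a • B + b • B')⁻¹)⁻¹)).det.re := by
    have := det_mono hcomb hpsd
    rwa [h7] at this
  have hlog1 : ldet (a • (A⁻¹ + B⁻¹)⁻¹ + b • (A'⁻¹ + B'⁻¹)⁻¹)
      ≤ ldet (((a • A + b • A')⁻¹ + (a • B + b • B')⁻¹)⁻¹) :=
    Real.log_le_log (det_re_pos hcomb) hmono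
  have hlog2 := logdet_concave hPP hPP' ha hb hab
  show - ldet (((a • A + b • A')⁻¹ + (a • B + b • B')⁻¹)⁻¹)
      ≤ a * - ldet ((A⁻¹ + B⁻¹)⁻¹) + b * - ldet ((A'⁻¹ + B'⁻¹)⁻¹)
  have e1 : a * - ldet ((A⁻¹ + B⁻¹)⁻¹) + b * - ldet ((A'⁻¹ + B'⁻¹)⁻¹)
      = -(a * ldet ((A⁻¹ + B⁻¹)⁻¹) + b * ldet ((A'⁻¹ + B'⁻¹)⁻¹)) := by ring
  rw [e1]
  have hlog2' : a * ldet ((A⁻¹ + B⁻¹)⁻¹) + b * ldet ((A'⁻¹ + B'⁻¹)⁻¹)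
      ≤ ldet (a • (A⁻¹ + B⁻¹)⁻¹ + b • (A'⁻¹ + B'⁻¹)⁻¹) := hlog2
  linarith

lemma sum_posDef {k : ℕ} (ρ : Fin (k + 1) → Matrix d d ℂ) (h : ∀ i, (ρ i).PosDef) :
    (∑ i, ρ i).PosDef := by
  induction k with
  | zero => simpa using h 0
  | succ k ih =>
      rw [Fin.sum_univ_succ]
      exact (h 0).add (ih (fun i => ρ i.succ) (fun i => h _))

lemma main_ineq {k : ℕ} (ρ σ : Fin k → Matrix d d ℂ) (hρ : ∀ i, (ρ i).PosDef)
    (hσ : ∀ i, (σ i).PosDef) {a b : ℝ} (ha : 0 < a) (hb : 0 < b) (hab : a + b = 1) :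
    ldet (∑ i, (a • ρ i + b • σ i)) - ∑ i, ldet (a • ρ i + b • σ i)
      ≤ a * (ldet (∑ i, ρ i) - ∑ i, ldet (ρ i))
        + b * (ldet (∑ i, σ i) - ∑ i, ldet (σ i)) := by
  induction k with
  | zero =>
      simp only [Finset.univ_eq_empty, Finset.sum_empty, sub_zero]
      have h0 : a * ldet (0 : Matrix d d ℂ) + b * ldet (0 : Matrix d d ℂ)
          = ldet (0 : Matrix d d ℂ) := by rw [← add_mul, hab, one_mul]
      linarith
  | succ k ih =>
      rcases Nat.eq_zero_or_pos k with hk | hk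
      · subst hk
        simp
      obtain ⟨m, rfl⟩ : ∃ m, k = m + 1 := ⟨k - 1, by omega⟩
      have hTc : ∑ i : Fin (m + 1), (a • ρ i.succ + b • σ i.succ)
          = a • (∑ i : Fin (m + 1), ρ i.succ) + b • (∑ i : Fin (m + 1), σ i.succ) := by
        rw [Finset.sum_add_distrib, ← Finset.smul_sum, ← Finset.smul_sum]
      have hH := H_ineq (hρ 0) (sum_posDef (fun i => ρ i.succ) (fun i => hρ _))
        (hσ 0) (sum_posDef (fun i => σ i.succ) (fun i => hσ _)) ha hb hab
      have hG := ih (fun i => ρ i.succ) (fun i => σ i.succ) (fun i => hρ _) (fun i => hσ _)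
      rw [hTc] at hG
      have d1 : ∑ i : Fin (m + 2), (a • ρ i + b • σ i)
          = (a • ρ 0 + b • σ 0) + ∑ i : Fin (m + 1), (a • ρ i.succ + b • σ i.succ) :=
        Fin.sum_univ_succ _
      have d2 : ∑ i : Fin (m + 2), ρ i = ρ 0 + ∑ i : Fin (m + 1), ρ i.succ :=
        Fin.sum_univ_succ _
      have d3 : ∑ i : Fin (m + 2), σ i = σ 0 + ∑ i : Fin (m + 1), σ i.succ :=
        Fin.sum_univ_succ _
      have d4 : ∑ i : Fin (m + 2), ldet (a • ρ i + b • σ i)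
          = ldet (a • ρ 0 + b • σ 0) + ∑ i : Fin (m + 1), ldet (a • ρ i.succ + b • σ i.succ) :=
        Fin.sum_univ_succ _
      have d5 : ∑ i : Fin (m + 2), ldet (ρ i) = ldet (ρ 0) + ∑ i : Fin (m + 1), ldet (ρ i.succ) :=
        Fin.sum_univ_succ _
      have d6 : ∑ i : Fin (m + 2), ldet (σ i) = ldet (σ 0) + ∑ i : Fin (m + 1), ldet (σ i.succ) :=
        Fin.sum_univ_succ _
      rw [d1, d2, d3, d4, d5, d6, hTc]
      linarith

end SubentropyAux

namespace SubentropyAux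

variable {d : Type} [Fintype d] [DecidableEq d]

lemma trFn_neg_log {ρ : Matrix d d ℂ} (hρ : ρ.PosDef) :
    trFn (fun t => - Real.log t) ρ = - ldet ρ := by
  rw [trFn, dif_pos hρ.1, ldet]
  have h1 : ρ.det.re = ∏ i, hρ.1.eigenvalues i := by
    have h2 : ρ.det = ((∏ i, hρ.1.eigenvalues i : ℝ) : ℂ) := by
      rw [hρ.1.det_eq_prod_eigenvalues]
      push_cast
      rfl
    rw [h2, Complex.ofReal_re]
  rw [h1, Real.log_prod (fun i _ => (hρ.eigenvalues_pos i).ne')]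
  simp

lemma G_eq {k : ℕ} (hk : 0 < k) (ρ : Fin k → Matrix d d ℂ) (hρ : ∀ i, (ρ i).PosDef) :
    - trFn (fun t => - Real.log t) (∑ i, ρ i) + ∑ i, trFn (fun t => - Real.log t) (ρ i)
      = ldet (∑ i, ρ i) - ∑ i, ldet (ρ i) := by
  obtain ⟨m, rfl⟩ : ∃ m, k = m + 1 := ⟨k - 1, by omega⟩
  rw [trFn_neg_log (sum_posDef ρ hρ)]
  have h3 : ∑ i, trFn (fun t => - Real.log t) (ρ i) = ∑ i, - ldet (ρ i) :=
    Finset.sum_congr rfl fun i _ => trFn_neg_log (hρ i)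
  rw [h3]
  simp
  ring

end SubentropyAux

/-- The convex function `f(t) = -log t` is subentropic: for every `k`
the function `(ρ₁,…,ρ_k) ↦ Tr log(ρ₁+⋯+ρ_k) - (Tr log ρ₁ + ⋯ + Tr log ρ_k)` is convex
in positive definite operators on any finite-dimensional Hilbert space. -/
theorem neg_log_subentropic : Subentropic (fun t => - Real.log t) := by
  intro k
  constructor
  · exact (strictConcaveOn_log_Ioi.concaveOn).neg
  intro n
  rcases Nat.eq_zero_or_pos k with hk | hk
  · subst hk
    have hset : {ρ : Fin 0 → Matrix (Fin n) (Fin n) ℂ | ∀ i, (ρ i).PosDef} = Set.univ := by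
      ext ρ
      simp only [Set.mem_setOf_eq, Set.mem_univ, iff_true]
      exact fun i => i.elim0
    have hfun : (fun ρ : Fin 0 → Matrix (Fin n) (Fin n) ℂ =>
        - trFn (fun t => - Real.log t) (∑ i, ρ i) + ∑ i, trFn (fun t => - Real.log t) (ρ i))
        = fun _ => - trFn (fun t => - Real.log t) (0 : Matrix (Fin n) (Fin n) ℂ) := by
      funext ρ
      simp
    rw [hset, hfun]
    exact convexOn_const _ convex_univ
  constructor
  · intro ρ hρ σ hσ a b ha hb hab i
    have h : (a • ρ + b • σ) i = a • ρ i + b • σ i := rfl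
    rw [h]
    exact SubentropyAux.posDef_combo (hρ i) (hσ i) ha hb hab
  · intro ρ hρ σ hσ a b ha hb hab
    rcases eq_or_lt_of_le ha with h | h
    · have hb1 : b = 1 := by linarith
      rw [← h, hb1]
      simp
    rcases eq_or_lt_of_le hb with h' | h'
    · have ha1 : a = 1 := by linarith
      rw [← h', ha1]
      simp
    have hcombo : ∀ i : Fin k, (a • ρ i + b • σ i).PosDef :=
      fun i => SubentropyAux.posDef_combo (hρ i) (hσ i) ha hb hab
    have key := SubentropyAux.main_ineq ρ σ hρ hσ h h' hab
    simp only [Pi.add_apply, Pi.smul_apply, smul_eq_mul]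
    rw [SubentropyAux.G_eq hk (fun i => a • ρ i + b • σ i) hcombo,
      SubentropyAux.G_eq hk ρ hρ, SubentropyAux.G_eq hk σ hσ]
    exact key


end
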